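/- The elliptic curve E : Y² = X³ + A·X + B (with A, B ∈ ℤ and 4A³ + 27B² ≠ 0) has a rational point of order 8 if and only if there exist integers z₁, z₂, z₃ such that 3A = −(z₁⁴ − 4z₁²z₂² + z₂⁴), 27B = (z₁² − 2z₂²)·(2z₁⁴ − 8z₁²z₂² − z₂⁴), and z₃² = z₁·(2z₂ + z₁). -/

import Mathlib

/-- The elliptic curve `E : Y² = X³ + A·X + B` over `ℚ`, as an affine Weierstrass curve. -/
noncomputable def E (A B : ℤ) : WeierstrassCurve.Affine ℚ :=
  { a₁ := 0, a₂ := 0, a₃ := 0, a₄ := (A : ℚ), a₆ := (B : ℚ) }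

open WeierstrassCurve.Affine WeierstrassCurve.Affine.Point Polynomial

lemma Ea1 (A B : ℤ) : (E A B).a₁ = 0 := rfl
lemma Ea2 (A B : ℤ) : (E A B).a₂ = 0 := rfl
lemma Ea3 (A B : ℤ) : (E A B).a₃ = 0 := rfl
lemma Ea4 (A B : ℤ) : (E A B).a₄ = (A : ℚ) := rfl
lemma Ea6 (A B : ℤ) : (E A B).a₆ = (B : ℚ) := rfl

lemma EnegY (A B : ℤ) (x y : ℚ) : (E A B).negY x y = -y := by
  simp [WeierstrassCurve.Affine.negY, Ea1, Ea3]

lemma Eeq {A B : ℤ} {x y : ℚ} : (E A B).Equation x y ↔ y ^ 2 = x ^ 3 + A * x + B := by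
  rw [WeierstrassCurve.Affine.equation_iff, Ea1, Ea2, Ea3, Ea4, Ea6]
  constructor <;> intro h <;> linear_combination h

set_option maxHeartbeats 1000000 in
lemma EΔ (A B : ℤ) : (E A B).Δ = -16 * (4 * (A:ℚ) ^ 3 + 27 * (B:ℚ) ^ 2) := by
  simp only [WeierstrassCurve.Δ, WeierstrassCurve.b₂, WeierstrassCurve.b₄, WeierstrassCurve.b₆,
    WeierstrassCurve.b₈, E]
  ring

set_option maxHeartbeats 1000000 in
lemma Ens {A B : ℤ} (hΔ : 4 * A ^ 3 + 27 * B ^ 2 ≠ 0) {x y : ℚ}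
    (h : (E A B).Equation x y) : (E A B).Nonsingular x y := by
  refine ((E A B).equation_iff_nonsingular_of_Δ_ne_zero ?_).mp h
  rw [EΔ]
  intro hc
  rcases mul_eq_zero.mp hc with h' | h'
  · norm_num at h'
  · exact hΔ (by exact_mod_cast h')

lemma Esq {A B : ℤ} {x y : ℚ} (h : (E A B).Nonsingular x y) :
    y ^ 2 = x ^ 3 + A * x + B := Eeq.mp h.1

lemma int_of_sq (n : ℤ) (q : ℚ) (h : q ^ 2 = (n : ℚ)) : ∃ k : ℤ, q = (k : ℚ) := by
  have hint : IsIntegral ℤ q := by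
    refine ⟨X ^ 2 - C n, monic_X_pow_sub_C n two_ne_zero, ?_⟩
    rw [← Polynomial.aeval_def]
    simp only [map_sub, map_pow, map_add, map_mul, aeval_X, aeval_C, algebraMap_int_eq, eq_intCast, map_intCast]
    rw [h]; ring
  obtain ⟨k, hk⟩ := IsIntegrallyClosed.isIntegral_iff.mp hint
  exact ⟨k, by rw [← hk]; simp⟩

lemma int_of_cubic (a b : ℤ) (q : ℚ) (h : q ^ 3 + (a:ℚ) * q + (b:ℚ) = 0) :
    ∃ k : ℤ, q = (k : ℚ) := by
  have hint : IsIntegral ℤ q := by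
    refine ⟨X ^ 3 + (C a * X + C b), ?_, ?_⟩
    · apply monic_X_pow_add
      apply lt_of_le_of_lt (degree_add_le _ _)
      rw [max_lt_iff]
      constructor
      · apply lt_of_le_of_lt (degree_mul_le _ _)
        apply lt_of_le_of_lt (add_le_add degree_C_le degree_X_le)
        norm_num
      · exact lt_of_le_of_lt degree_C_le (by norm_num)
    · rw [← Polynomial.aeval_def]
      simp only [map_sub, map_pow, map_add, map_mul, aeval_X, aeval_C, algebraMap_int_eq, eq_intCast, map_intCast]
      linear_combination h
  obtain ⟨k, hk⟩ := IsIntegrallyClosed.isIntegral_iff.mp hint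
  exact ⟨k, by rw [← hk]; simp⟩

set_option maxHeartbeats 1600000 in
lemma Edouble {A B : ℤ} {x y : ℚ} (h : (E A B).Nonsingular x y) (hy : y ≠ 0) :
    ∃ (x' y' : ℚ) (h' : (E A B).Nonsingular x' y'),
      Point.some _ _ h + Point.some _ _ h = Point.some _ _ h' ∧
      4 * y ^ 2 * x' = (3 * x ^ 2 + (A:ℚ)) ^ 2 - 8 * x * y ^ 2 ∧
      y' ^ 2 = x' ^ 3 + (A:ℚ) * x' + (B:ℚ) := by
  have hne : y ≠ (E A B).negY x y := by
    rw [EnegY]; intro hc; apply hy; linarith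
  refine ⟨_, _, nonsingular_add h h (fun hxy => hne hxy.2), add_self_of_Y_ne hne, ?_, ?_⟩
  · have hs : (E A B).slope x x y y = (3 * x ^ 2 + (A:ℚ)) / (2 * y) := by
      rw [WeierstrassCurve.Affine.slope_of_Y_ne rfl hne, EnegY, Ea1, Ea2, Ea4]
      rw [div_eq_div_iff (by intro hc; apply hy; linarith) (by intro hc; apply hy; linarith)]
      ring
    rw [WeierstrassCurve.Affine.addX, hs, Ea1, Ea2, div_pow]
    field_simp
    ring
  · exact Esq (nonsingular_add h h (fun hxy => hne hxy.2))

lemma Eadd_self_eq_zero {A B : ℤ} {x y : ℚ} (h : (E A B).Nonsingular x y) :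
    Point.some _ _ h + Point.some _ _ h = 0 ↔ y = 0 := by
  constructor
  · intro h0
    by_contra hy
    obtain ⟨x', y', h', heq, -, -⟩ := Edouble h hy
    rw [heq] at h0
    exact some_ne_zero h' h0
  · intro h0
    apply add_self_of_Y_eq
    rw [EnegY, h0]
    norm_num

set_option maxHeartbeats 4000000 in
theorem order_eight_iff (A B : ℤ) (hΔ : 4 * A ^ 3 + 27 * B ^ 2 ≠ 0) :
    (∃ P : (E A B).Point, addOrderOf P = 8) ↔
      ∃ z₁ z₂ z₃ : ℤ,
        3 * A = -(z₁ ^ 4 - 4 * z₁ ^ 2 * z₂ ^ 2 + z₂ ^ 4) ∧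
        27 * B = (z₁ ^ 2 - 2 * z₂ ^ 2) * (2 * z₁ ^ 4 - 8 * z₁ ^ 2 * z₂ ^ 2 - z₂ ^ 4) ∧
        z₃ ^ 2 = z₁ * (2 * z₂ + z₁) := by
  constructor
  · rintro ⟨P, hP8⟩
    rcases P with _ | @⟨ξ, η, hp⟩
    · rw [← WeierstrassCurve.Affine.Point.zero_def, addOrderOf_zero] at hP8
      exact absurd hP8 (by norm_num)
    have h8 : (8:ℕ) • (Point.some _ _ hp) = 0 := by
      rw [← hP8]; exact addOrderOf_nsmul_eq_zero _
    have hndvd : ∀ k : ℕ, k • (Point.some _ _ hp) = 0 → (8:ℕ) ∣ k := fun k hk =>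
      hP8 ▸ addOrderOf_dvd_of_nsmul_eq_zero hk
    have h4ne : (4:ℕ) • (Point.some _ _ hp) ≠ 0 := fun hc => by
      have := hndvd 4 hc; norm_num at this
    have h2ne : (2:ℕ) • (Point.some _ _ hp) ≠ 0 := fun hc => by
      have := hndvd 2 hc; norm_num at this
    have hηne : η ≠ 0 := fun h0 => h2ne (by
      rw [two_nsmul]; exact (Eadd_self_eq_zero hp).mpr h0)
    obtain ⟨u, v, hq, heq2, hx2, hv2⟩ := Edouble hp hηne
    have e2 : (2:ℕ) • (Point.some _ _ hp) = Point.some _ _ hq := by rw [two_nsmul]; exact heq2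
    have hvne : v ≠ 0 := fun h0 => h4ne (by
      rw [show (4:ℕ) = 2+2 from rfl, add_nsmul, e2]
      exact (Eadd_self_eq_zero hq).mpr h0)
    obtain ⟨m, yR, hr3, heq3, hx3, hyR⟩ := Edouble hq hvne
    have e4 : (4:ℕ) • (Point.some _ _ hp) = Point.some _ _ hr3 := by
      rw [show (4:ℕ) = 2+2 from rfl, add_nsmul, e2, heq3]
    have e8 : Point.some _ _ hr3 + Point.some _ _ hr3 = 0 := by
      rw [← e4, ← add_nsmul]
      rw [show (4+4:ℕ) = 8 from rfl]
      exact h8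
    have hyR0 : yR = 0 := (Eadd_self_eq_zero hr3).mp e8
    have hm0 : m ^ 3 + (A:ℚ) * m + (B:ℚ) = 0 := by
      rw [hyR0] at hyR; linear_combination -hyR
    have hP1 : η ^ 2 = ξ ^ 3 + (A:ℚ) * ξ + (B:ℚ) := Esq hp
    have hsq : ((u - m) ^ 2 - (3 * m ^ 2 + (A:ℚ))) ^ 2 = 0 := by
      linear_combination (-1) * hx3 + (4*(m+2*u)) * hv2 + (4*(m+2*u)) * hm0
    have claim1 : (u - m) ^ 2 = 3 * m ^ 2 + (A:ℚ) := by
      have := pow_eq_zero_iff (by norm_num : (2:ℕ) ≠ 0) |>.mp hsq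
      linear_combination this
    have key2 : v ^ 2 = (2*(u-m)+3*m) * (u-m) ^ 2 := by
      linear_combination hv2 + hm0 + (m-u) * claim1
    have hw0 : u - m ≠ 0 := by
      intro h0
      apply hvne
      rw [h0] at key2
      have : v ^ 2 = 0 := by rw [key2]; ring
      exact pow_eq_zero_iff (by norm_num : (2:ℕ) ≠ 0) |>.mp this
    have key : ((ξ-m) ^ 2 - (3*m^2+(A:ℚ))) ^ 2 = (u-m) * (2*η) ^ 2 := by
      linear_combination (-1) * hx2 + (8*ξ+4*m) * hP1 + (8*ξ+4*m) * hm0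
    have h2η : (2*η) ≠ 0 := mul_ne_zero (by norm_num) hηne
    set r : ℚ := ((ξ-m) ^ 2 - (3*m^2+(A:ℚ))) / (2*η) with hrdef
    have hr2 : r ^ 2 = u - m := by
      rw [hrdef, div_pow, key, mul_div_cancel_right₀ _ (pow_ne_zero 2 h2η)]
    set s : ℚ := v / (u - m) with hsdef
    have hs2 : s ^ 2 = 2*(u-m)+3*m := by
      rw [hsdef, div_pow, key2, mul_div_cancel_right₀ _ (pow_ne_zero 2 hw0)]
    have hr0 : r ≠ 0 := by
      intro h0; apply hw0; rw [← hr2, h0]; ring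
    have step1 : ((ξ-m)^2 - (u-m)^2) ^ 2 = (u-m) * (2*η) ^ 2 := by
      linear_combination key + (-2*ξ^2+4*ξ*m+u^2-2*u*m+2*m^2+(A:ℚ)) * claim1
    have step2 : η ^ 2 = (ξ-m) * ((ξ-m)^2 + 3*m*(ξ-m) + (u-m)^2) := by
      linear_combination hP1 + hm0 + (m-ξ) * claim1
    have e1 : (2*s*r*(ξ-m)) ^ 2 = 4 * (2*(u-m)+3*m) * (u-m) * (ξ-m)^2 := by
      linear_combination (4*ξ^2*r^2-8*ξ*m*r^2+4*m^2*r^2) * hs2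
        + (8*ξ^2*u+4*ξ^2*m-16*ξ*u*m-8*ξ*m^2+8*u*m^2+4*m^3) * hr2
    have key3 : (((ξ-m)-(u-m))^2 - 2*s*r*(ξ-m)) * (((ξ-m)-(u-m))^2 + 2*s*r*(ξ-m)) = 0 := by
      linear_combination (-1) * e1 + step1 + (4*u-4*m) * step2
    -- integrality
    obtain ⟨m₀, hm₀⟩ := int_of_cubic A B m hm0
    obtain ⟨w₀, hw₀⟩ := int_of_sq (3*m₀^2+A) (u-m) (by
      push_cast; rw [← hm₀]; linear_combination claim1)
    obtain ⟨r₀, hr₀⟩ := int_of_sq w₀ r (by rw [hr2]; exact hw₀)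
    obtain ⟨s₀, hs₀⟩ := int_of_sq (2*w₀+3*m₀) s (by
      push_cast; rw [hs2, hw₀, hm₀])
    have hq9 : 3 * (A:ℚ) = -((s₀:ℚ)^4 - 4*(s₀:ℚ)^2*(r₀:ℚ)^2 + (r₀:ℚ)^4) := by
      rw [← hs₀, ← hr₀]
      linear_combination (-3) * claim1 + (2*u+m-4*r^2+s^2) * hs2 + (-7*u-5*m+r^2) * hr2
    have hq10 : 27 * (B:ℚ) = ((s₀:ℚ)^2-2*(r₀:ℚ)^2) * (2*(s₀:ℚ)^4-8*(s₀:ℚ)^2*(r₀:ℚ)^2-(r₀:ℚ)^4) := by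
      rw [← hs₀, ← hr₀]
      linear_combination 27 * hm0 + (27*m) * claim1
        + (-8*u^2-8*u*m+24*u*r^2-4*u*s^2-2*m^2+12*m*r^2-2*m*s^2-15*r^4+12*r^2*s^2-2*s^4) * hs2
        + (16*u^2+67*u*m-32*u*r^2+25*m^2-13*m*r^2-2*r^4) * hr2
    rcases mul_eq_zero.mp key3 with hquad | hquad
    · have keyt : ((ξ-m)-(u-m)-s*r) ^ 2 = (s*(s+2*r)) * r ^ 2 := by
        linear_combination hquad - 2*s*r * hr2
      have ht2 : (((ξ-m)-(u-m)-s*r)/r) ^ 2 = s*(s+2*r) := by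
        rw [div_pow, keyt, mul_div_cancel_right₀ _ (pow_ne_zero 2 hr0)]
      obtain ⟨t₀, ht₀⟩ := int_of_sq (s₀*(s₀+2*r₀)) _ (by push_cast; rw [ht2, hs₀, hr₀])
      refine ⟨s₀, r₀, t₀, by exact_mod_cast hq9, by exact_mod_cast hq10, ?_⟩
      have hz : (t₀:ℚ)^2 = (s₀:ℚ) * (2*(r₀:ℚ) + (s₀:ℚ)) := by
        rw [← ht₀, ht2, hs₀, hr₀]; ring
      exact_mod_cast hz
    · have keyt : ((ξ-m)-(u-m)+s*r) ^ 2 = (s*(s-2*r)) * r ^ 2 := by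
        linear_combination hquad + 2*s*r * hr2
      have ht2 : (((ξ-m)-(u-m)+s*r)/r) ^ 2 = s*(s-2*r) := by
        rw [div_pow, keyt, mul_div_cancel_right₀ _ (pow_ne_zero 2 hr0)]
      obtain ⟨t₀, ht₀⟩ := int_of_sq (s₀*(s₀-2*r₀)) _ (by push_cast; rw [ht2, hs₀, hr₀])
      refine ⟨s₀, -r₀, t₀, ?_, ?_, ?_⟩
      · have h' : 3*A = -(s₀^4 - 4*s₀^2*r₀^2 + r₀^4) := by exact_mod_cast hq9
        linear_combination h'
      · have h' : 27*B = (s₀^2-2*r₀^2)*(2*s₀^4-8*s₀^2*r₀^2-r₀^4) := by exact_mod_cast hq10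
        linear_combination h'
      · have hz : (t₀:ℚ)^2 = (s₀:ℚ) * ((s₀:ℚ) - 2*(r₀:ℚ)) := by
        -- case2
          rw [← ht₀, ht2, hs₀, hr₀]
        have h' : t₀^2 = s₀ * (s₀ - 2*r₀) := by exact_mod_cast hz
        linear_combination h'
  · rintro ⟨z₁, z₂, z₃, ha1, ha2, ha3⟩
    have hD : 4 * A ^ 3 + 27 * B ^ 2 = -(z₁ ^ 2 * z₂ ^ 8 * (z₁ ^ 2 - 4 * z₂ ^ 2)) := by
      have h27 : (27:ℤ) * (4 * A ^ 3 + 27 * B ^ 2)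
          = 27 * -(z₁ ^ 2 * z₂ ^ 8 * (z₁ ^ 2 - 4 * z₂ ^ 2)) := by
        linear_combination (4 * (9 * A ^ 2 - 3 * A * (z₁ ^ 4 - 4 * z₁ ^ 2 * z₂ ^ 2 + z₂ ^ 4)
            + (z₁ ^ 4 - 4 * z₁ ^ 2 * z₂ ^ 2 + z₂ ^ 4) ^ 2)) * ha1
          + (27 * B + (z₁ ^ 2 - 2 * z₂ ^ 2) * (2 * z₁ ^ 4 - 8 * z₁ ^ 2 * z₂ ^ 2 - z₂ ^ 4)) * ha2
      exact mul_left_cancel₀ (by norm_num) h27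
    have hz1 : z₁ ≠ 0 := by rintro rfl; apply hΔ; rw [hD]; ring
    have hz2 : z₂ ≠ 0 := by rintro rfl; apply hΔ; rw [hD]; ring
    have hz4 : z₁ ^ 2 - 4 * z₂ ^ 2 ≠ 0 := by intro h0; apply hΔ; rw [hD, h0]; ring
    have hz3 : z₃ ≠ 0 := by
      rintro rfl
      rcases mul_eq_zero.mp (show z₁ * (2 * z₂ + z₁) = 0 by linear_combination -ha3) with h | h
      · exact hz1 h
      · exact hz4 (by linear_combination (z₁ - 2 * z₂) * h)
    have hsum : z₁ + z₂ + z₃ ≠ 0 := by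
      intro h0
      apply hz2
      have : z₂ ^ 2 = 0 := by linear_combination ha3 + (z₁ + z₂ - z₃) * h0
      exact pow_eq_zero_iff (by norm_num : (2:ℕ) ≠ 0) |>.mp this
    have hA : (A:ℚ) = -((z₁:ℚ)^4 - 4*(z₁:ℚ)^2*(z₂:ℚ)^2 + (z₂:ℚ)^4) / 3 := by
      have h3A : (3:ℚ) * (A:ℚ) = -((z₁:ℚ)^4 - 4*(z₁:ℚ)^2*(z₂:ℚ)^2 + (z₂:ℚ)^4) := by
        exact_mod_cast ha1
      linear_combination h3A / 3
    have hB : (B:ℚ) = ((z₁:ℚ)^2 - 2*(z₂:ℚ)^2) * (2*(z₁:ℚ)^4 - 8*(z₁:ℚ)^2*(z₂:ℚ)^2 - (z₂:ℚ)^4) / 27 := by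
      have h27B : (27:ℚ) * (B:ℚ)
          = ((z₁:ℚ)^2 - 2*(z₂:ℚ)^2) * (2*(z₁:ℚ)^4 - 8*(z₁:ℚ)^2*(z₂:ℚ)^2 - (z₂:ℚ)^4) := by
        exact_mod_cast ha2
      linear_combination h27B / 27
    have hd : (z₃:ℚ) ^ 2 = (z₁:ℚ) * (2*(z₂:ℚ) + (z₁:ℚ)) := by exact_mod_cast ha3
    have heqP : (E A B).Equation
        (((z₁:ℚ)^2 - 2*(z₂:ℚ)^2)/3 + (z₂:ℚ)*((z₁:ℚ)+(z₂:ℚ)+(z₃:ℚ)))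
        ((z₂:ℚ)*(z₃:ℚ)*((z₁:ℚ)+(z₂:ℚ)+(z₃:ℚ))) := by
      rw [Eeq, hA, hB]
      linear_combination ((z₁:ℚ)^2*(z₂:ℚ)^2 + (z₁:ℚ)*(z₂:ℚ)^3 + 2*(z₁:ℚ)*(z₂:ℚ)^2*(z₃:ℚ)
        + (z₂:ℚ)^3*(z₃:ℚ) + (z₂:ℚ)^2*(z₃:ℚ)^2) * hd
    have hp := Ens hΔ heqP
    have hηne : (z₂:ℚ)*(z₃:ℚ)*((z₁:ℚ)+(z₂:ℚ)+(z₃:ℚ)) ≠ 0 := by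
      have hb : (z₂:ℚ) ≠ 0 := Int.cast_ne_zero.mpr hz2
      have hc : (z₃:ℚ) ≠ 0 := Int.cast_ne_zero.mpr hz3
      have hs : ((z₁:ℚ)+(z₂:ℚ)+(z₃:ℚ)) ≠ 0 := by
        intro hc0; apply hsum; exact_mod_cast hc0
      exact mul_ne_zero (mul_ne_zero hb hc) hs
    obtain ⟨u, v, hq, heq2, hx2, hv2⟩ := Edouble hp hηne
    have hu : u = ((z₁:ℚ)^2 - 2*(z₂:ℚ)^2)/3 + (z₂:ℚ)^2 := by
      apply mul_left_cancel₀ (show 4*((z₂:ℚ)*(z₃:ℚ)*((z₁:ℚ)+(z₂:ℚ)+(z₃:ℚ)))^2 ≠ 0 from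
        mul_ne_zero (by norm_num) (pow_ne_zero 2 hηne))
      rw [hx2, hA]
      linear_combination (-(4*(z₁:ℚ)^4*(z₂:ℚ)^2 + 12*(z₁:ℚ)^3*(z₂:ℚ)^3 + 8*(z₁:ℚ)^3*(z₂:ℚ)^2*(z₃:ℚ)
        + 9*(z₁:ℚ)^2*(z₂:ℚ)^4 + 28*(z₁:ℚ)^2*(z₂:ℚ)^3*(z₃:ℚ) + 4*(z₁:ℚ)^2*(z₂:ℚ)^2*(z₃:ℚ)^2
        + 2*(z₁:ℚ)*(z₂:ℚ)^5 + 20*(z₁:ℚ)*(z₂:ℚ)^4*(z₃:ℚ) + 24*(z₁:ℚ)*(z₂:ℚ)^3*(z₃:ℚ)^2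
        + 4*(z₂:ℚ)^5*(z₃:ℚ) + 11*(z₂:ℚ)^4*(z₃:ℚ)^2 + 8*(z₂:ℚ)^3*(z₃:ℚ)^3)) * hd
    subst hu
    have hv2' : v ^ 2 = (z₁:ℚ)^2 * (z₂:ℚ)^4 := by
      rw [hA, hB] at hv2
      linear_combination hv2
    have hvne : v ≠ 0 := by
      intro h0
      rw [h0] at hv2'
      have h00 : (z₁:ℚ)^2 * (z₂:ℚ)^4 = 0 := by linear_combination -hv2'
      rcases mul_eq_zero.mp h00 with h | h
      · exact hz1 (by exact_mod_cast pow_eq_zero_iff (by norm_num : (2:ℕ) ≠ 0) |>.mp h)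
      · exact hz2 (by exact_mod_cast pow_eq_zero_iff (by norm_num : (4:ℕ) ≠ 0) |>.mp h)
    obtain ⟨m, yR, hr3, heq3, hx3, hyR⟩ := Edouble hq hvne
    have hm : m = ((z₁:ℚ)^2 - 2*(z₂:ℚ)^2)/3 := by
      apply mul_left_cancel₀ (show 4*v^2 ≠ 0 from mul_ne_zero (by norm_num) (pow_ne_zero 2 hvne))
      rw [hx3, hv2', hA]
      ring
    subst hm
    have hyR0 : yR = 0 := by
      have h0 : yR ^ 2 = 0 := by rw [hyR, hA, hB]; ring
      exact pow_eq_zero_iff (by norm_num : (2:ℕ) ≠ 0) |>.mp h0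
    have e2 : (2:ℕ) • (Point.some _ _ hp) = Point.some _ _ hq := by rw [two_nsmul]; exact heq2
    have e4 : (4:ℕ) • (Point.some _ _ hp) = Point.some _ _ hr3 := by
      rw [show (4:ℕ) = 2+2 from rfl, add_nsmul, e2, heq3]
    have e8 : (8:ℕ) • (Point.some _ _ hp) = 0 := by
      rw [show (8:ℕ) = 4+4 from rfl, add_nsmul, e4]
      exact (Eadd_self_eq_zero hr3).mpr hyR0
    refine ⟨Point.some _ _ hp, ?_⟩
    have h4ne : ¬ (2:ℕ)^2 • (Point.some _ _ hp) = 0 := by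
      rw [show (2:ℕ)^2 = 4 from rfl, e4]
      exact some_ne_zero hr3
    have h8' : (2:ℕ)^(2+1) • (Point.some _ _ hp) = 0 := by
      rw [show (2:ℕ)^(2+1) = 8 from rfl]; exact e8
    have hfin := addOrderOf_eq_prime_pow h4ne h8'
    rw [hfin]
    norm_num
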